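/- Let u : ℝ² → ℝ be a C³ solution of u_yy = (u_y + 2x)·u_xx + (y − u_x)·u_xy − u_x. Then the function v(x,y) := y² − 2x + 2y·u_x − 2u_y satisfies the linearized equation v_yy = (u_y + 2x)·v_xx + u_xx·v_y + (y − u_x)·v_xy − (u_xy + 1)·v_x at every point of ℝ². -/

import Mathlib

/-- Partial derivative of `f : ℝ² → ℝ` in the direction `v`. -/
noncomputable def pd2 (v : ℝ × ℝ) (f : ℝ × ℝ → ℝ) : ℝ × ℝ → ℝ :=
  fun p => fderiv ℝ f p v

noncomputable def dx : (ℝ × ℝ → ℝ) → ℝ × ℝ → ℝ := pd2 (1, 0)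
noncomputable def dy : (ℝ × ℝ → ℝ) → ℝ × ℝ → ℝ := pd2 (0, 1)

section lemmas
variable {f g : ℝ × ℝ → ℝ} {w p : ℝ × ℝ}

lemma pd2_add (hf : DifferentiableAt ℝ f p) (hg : DifferentiableAt ℝ g p) :
    pd2 w (fun q => f q + g q) p = pd2 w f p + pd2 w g p := by
  simp [pd2, fderiv_fun_add hf hg]

lemma pd2_sub (hf : DifferentiableAt ℝ f p) (hg : DifferentiableAt ℝ g p) :
    pd2 w (fun q => f q - g q) p = pd2 w f p - pd2 w g p := by
  simp [pd2, fderiv_fun_sub hf hg]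

lemma pd2_mul (hf : DifferentiableAt ℝ f p) (hg : DifferentiableAt ℝ g p) :
    pd2 w (fun q => f q * g q) p = f p * pd2 w g p + pd2 w f p * g p := by
  simp [pd2, fderiv_fun_mul hf hg]; ring

lemma pd2_const_mul (hf : DifferentiableAt ℝ f p) (c : ℝ) :
    pd2 w (fun q => c * f q) p = c * pd2 w f p := by
  simp [pd2, fderiv_const_mul hf c]

lemma pd2_fst : pd2 w (fun q : ℝ × ℝ => q.1) p = w.1 := by
  simp [pd2, fderiv_fst]

lemma pd2_snd : pd2 w (fun q : ℝ × ℝ => q.2) p = w.2 := by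
  simp [pd2, fderiv_snd]

lemma pd2_snd_sq : pd2 w (fun q : ℝ × ℝ => q.2 ^ 2) p = 2 * p.2 * w.2 := by
  have : (fun q : ℝ × ℝ => q.2 ^ 2) = fun q : ℝ × ℝ => q.2 * q.2 := by ext q; ring
  rw [this, pd2_mul (by fun_prop) (by fun_prop), pd2_snd]; ring

lemma pd2_contDiff {f : ℝ × ℝ → ℝ} {v : ℝ × ℝ} {m n : WithTop ℕ∞} (hf : ContDiff ℝ n f)
    (h : m + 1 ≤ n) : ContDiff ℝ m (pd2 v f) :=
  (hf.fderiv_right h).clm_apply contDiff_const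

lemma pd2_comm {f : ℝ × ℝ → ℝ} (hf : ContDiff ℝ 2 f) (v w p : ℝ × ℝ) :
    pd2 w (pd2 v f) p = pd2 v (pd2 w f) p := by
  have h1 : DifferentiableAt ℝ (fderiv ℝ f) p :=
    ((hf.fderiv_right (m := 1) (by norm_num)).differentiable one_ne_zero).differentiableAt
  have hd : ∀ y, HasFDerivAt f (fderiv ℝ f y) y := fun y =>
    ((hf.differentiable (by norm_num)) y).hasFDerivAt
  have hx : HasFDerivAt (fderiv ℝ f) (fderiv ℝ (fderiv ℝ f) p) p := h1.hasFDerivAt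
  have hsym := second_derivative_symmetric hd hx v w
  have key : ∀ z : ℝ × ℝ, pd2 z f = fun q => fderiv ℝ f q z := fun z => rfl
  have hder : ∀ z : ℝ × ℝ, fderiv ℝ (fun q => fderiv ℝ f q z) p
      = (fderiv ℝ (fderiv ℝ f) p).flip z := by
    intro z
    rw [show (fun q => fderiv ℝ f q z) = fun q => (fderiv ℝ f q) ((fun _ => z) q) from rfl,
      fderiv_clm_apply h1 (differentiableAt_const z)]
    simp
  have e1 : pd2 w (pd2 v f) p = fderiv ℝ (fderiv ℝ f) p w v := by
    show fderiv ℝ (fun q => fderiv ℝ f q v) p w = _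
    rw [hder v]; rfl
  have e2 : pd2 v (pd2 w f) p = fderiv ℝ (fderiv ℝ f) p v w := by
    show fderiv ℝ (fun q => fderiv ℝ f q w) p v = _
    rw [hder w]; rfl
  rw [e1, e2, hsym]
end lemmas

lemma pd2_const {w p : ℝ × ℝ} (c : ℝ) : pd2 w (fun _ : ℝ × ℝ => c) p = 0 := by
  simp [pd2]

theorem gamma_m1_is_symmetry (u : ℝ × ℝ → ℝ) (hu : ContDiff ℝ 3 u)
    (heq : ∀ p : ℝ × ℝ,
      dy (dy u) p = (dy u p + 2 * p.1) * dx (dx u) p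
        + (p.2 - dx u p) * dx (dy u) p - dx u p) :
    ∀ p : ℝ × ℝ,
      (fun v : ℝ × ℝ → ℝ =>
        dy (dy v) p = (dy u p + 2 * p.1) * dx (dx v) p + dx (dx u) p * dy v p
          + (p.2 - dx u p) * dx (dy v) p - (dx (dy u) p + 1) * dx v p)
      (fun q => q.2 ^ 2 - 2 * q.1 + 2 * q.2 * dx u q - 2 * dy u q) := by
  intro p
  simp only [dx, dy] at heq ⊢
  set A : ℝ × ℝ → ℝ := pd2 (1, 0) u with hA_def
  set B : ℝ × ℝ → ℝ := pd2 (0, 1) u with hB_def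
  have hu2 : ContDiff ℝ 2 u := hu.of_le (by norm_num)
  have hA : ContDiff ℝ 2 A := pd2_contDiff hu (by norm_num)
  have hB : ContDiff ℝ 2 B := pd2_contDiff hu (by norm_num)
  have hAd : Differentiable ℝ A := hA.differentiable (by norm_num)
  have hBd : Differentiable ℝ B := hB.differentiable (by norm_num)
  have hAx : Differentiable ℝ (pd2 (1, 0) A) :=
    (pd2_contDiff (m := 1) hA (by norm_num)).differentiable (by norm_num)
  have hAy : Differentiable ℝ (pd2 (0, 1) A) :=
    (pd2_contDiff (m := 1) hA (by norm_num)).differentiable (by norm_num)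
  have hBx : Differentiable ℝ (pd2 (1, 0) B) :=
    (pd2_contDiff (m := 1) hB (by norm_num)).differentiable (by norm_num)
  have hBy : Differentiable ℝ (pd2 (0, 1) B) :=
    (pd2_contDiff (m := 1) hB (by norm_num)).differentiable (by norm_num)
  -- symmetry of mixed derivatives
  have sAB : pd2 (0, 1) A = pd2 (1, 0) B := funext fun r => pd2_comm hu2 (1, 0) (0, 1) r
  have swap1 : ∀ r, pd2 (0, 1) (pd2 (1, 0) A) r = pd2 (1, 0) (pd2 (1, 0) B) r := fun r => by
    rw [pd2_comm hA (1, 0) (0, 1) r, sAB]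
  have swap2 : ∀ r, pd2 (0, 1) (pd2 (1, 0) B) r = pd2 (1, 0) (pd2 (0, 1) B) r := fun r =>
    pd2_comm hB (1, 0) (0, 1) r
  set V : ℝ × ℝ → ℝ := fun q => q.2 ^ 2 - 2 * q.1 + 2 * q.2 * A q - 2 * B q with hV_def
  -- first derivatives of V
  have hVx : pd2 (1, 0) V = fun r => 2 * r.2 * pd2 (1, 0) A r - 2 * pd2 (1, 0) B r - 2 := by
    funext r
    rw [hV_def]
    simp (disch := fun_prop) only [pd2_sub, pd2_add, pd2_mul, pd2_const_mul, pd2_fst,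
      pd2_snd, pd2_snd_sq, pd2_const]
    ring
  have hVy : pd2 (0, 1) V
      = fun r => 2 * r.2 + 2 * A r + 2 * r.2 * pd2 (0, 1) A r - 2 * pd2 (0, 1) B r := by
    funext r
    rw [hV_def]
    simp (disch := fun_prop) only [pd2_sub, pd2_add, pd2_mul, pd2_const_mul, pd2_fst,
      pd2_snd, pd2_snd_sq, pd2_const]
    ring
  -- second derivatives of V at p
  have hVxx : pd2 (1, 0) (pd2 (1, 0) V) p
      = 2 * p.2 * pd2 (1, 0) (pd2 (1, 0) A) p - 2 * pd2 (1, 0) (pd2 (1, 0) B) p := by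
    rw [hVx]
    simp (disch := fun_prop) only [pd2_sub, pd2_add, pd2_mul, pd2_const_mul, pd2_fst,
      pd2_snd, pd2_snd_sq, pd2_const]
    ring
  have hVxy : pd2 (1, 0) (pd2 (0, 1) V) p
      = 2 * pd2 (1, 0) A p + 2 * p.2 * pd2 (1, 0) (pd2 (0, 1) A) p
        - 2 * pd2 (1, 0) (pd2 (0, 1) B) p := by
    rw [hVy]
    simp (disch := fun_prop) only [pd2_sub, pd2_add, pd2_mul, pd2_const_mul, pd2_fst,
      pd2_snd, pd2_snd_sq, pd2_const]
    ring
  have hVyy : pd2 (0, 1) (pd2 (0, 1) V) p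
      = 2 + 4 * pd2 (0, 1) A p + 2 * p.2 * pd2 (0, 1) (pd2 (0, 1) A) p
        - 2 * pd2 (0, 1) (pd2 (0, 1) B) p := by
    rw [hVy]
    simp (disch := fun_prop) only [pd2_sub, pd2_add, pd2_mul, pd2_const_mul, pd2_fst,
      pd2_snd, pd2_snd_sq, pd2_const]
    ring
  -- the equation as an equality of functions
  have heqf : pd2 (0, 1) B
      = fun r => (B r + 2 * r.1) * pd2 (1, 0) A r + (r.2 - A r) * pd2 (1, 0) B r - A r :=
    funext heq
  -- x-derivative of the equation
  have Ex : pd2 (1, 0) (pd2 (0, 1) B) p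
      = pd2 (1, 0) A p + (B p + 2 * p.1) * pd2 (1, 0) (pd2 (1, 0) A) p
        + (p.2 - A p) * pd2 (1, 0) (pd2 (1, 0) B) p := by
    rw [heqf]
    simp (disch := fun_prop) only [pd2_sub, pd2_add, pd2_mul, pd2_const_mul, pd2_fst,
      pd2_snd, pd2_snd_sq, pd2_const]
    rw [hA_def, hB_def, pd2_comm hu2 (0, 1) (1, 0) p]
    ring
  -- y-derivative of the equation
  have Ey : pd2 (0, 1) (pd2 (0, 1) B) p
      = pd2 (0, 1) B p * pd2 (1, 0) A p + (B p + 2 * p.1) * pd2 (1, 0) (pd2 (1, 0) B) p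
        - pd2 (1, 0) B p ^ 2 + (p.2 - A p) * pd2 (1, 0) (pd2 (0, 1) B) p := by
    conv_lhs => rw [heqf]
    simp (disch := fun_prop) only [pd2_sub, pd2_add, pd2_mul, pd2_const_mul, pd2_fst,
      pd2_snd, pd2_snd_sq, pd2_const]
    rw [swap1 p, swap2 p, sAB]
    ring
  rw [hVxx, hVxy, hVyy, hVx, hVy, sAB, swap2 p]
  simp only []
  linear_combination (2 * p.2) * Ex - 2 * Ey
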